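/- arXiv:2112.05119 — 2 statements merged into one kernel-verified Lean document; each statement's English description precedes it below -/
import Mathlib

section
/- Let V be a partial isometry on a complex Hilbert space H and 𝒱 = iXV − iVY with X, Y ∈ B(H) selfadjoint. On the Hilbert space H × H (with inner product ⟨(ξ₁,η₁),(ξ₂,η₂)⟩ = ⟨ξ₁,ξ₂⟩ + ⟨η₁,η₂⟩) define V⊕0 by (V⊕0)(ξ,η) = (Vξ, 0) and 𝒱⊕0 by (𝒱⊕0)(ξ,η) = (𝒱ξ, 0). Then V⊕0 is a partial isometry on H × H, 𝒱⊕0 is a tangent vector at V⊕0 (i.e., 𝒱⊕0 = i𝐗(V⊕0) − i(V⊕0)𝐘 for some selfadjoint 𝐗, 𝐘 on H × H), and |𝒱⊕0|_{V⊕0} = |𝒱|_V. -/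
variable {H : Type*} [NormedAddCommGroup H] [InnerProductSpace ℂ H] [CompleteSpace H]

set_option linter.unusedSectionVars false

noncomputable def oplus (A : H →L[ℂ] H) : WithLp 2 (H × H) →L[ℂ] WithLp 2 (H × H) :=
  ((WithLp.prodContinuousLinearEquiv 2 ℂ H H).symm.toContinuousLinearMap.comp
    (A.prodMap 0)).comp (WithLp.prodContinuousLinearEquiv 2 ℂ H H).toContinuousLinearMap

lemma oplus_fst (A : H →L[ℂ] H) (x : WithLp 2 (H × H)) : (oplus A x).fst = A x.fst := rfl
lemma oplus_snd (A : H →L[ℂ] H) (x : WithLp 2 (H × H)) : (oplus A x).snd = 0 := rfl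

lemma L2_ext {x y : WithLp 2 (H × H)} (h1 : x.fst = y.fst) (h2 : x.snd = y.snd) : x = y :=
  WithLp.ofLp_injective 2 (Prod.ext h1 h2)

lemma oplus_apply (A : H →L[ℂ] H) (x : WithLp 2 (H × H)) :
    oplus A x = (WithLp.equiv 2 (H × H)).symm (A x.fst, 0) := rfl

lemma oplus_mul (A B : H →L[ℂ] H) : oplus A * oplus B = oplus (A * B) := by
  ext x : 1
  exact L2_ext rfl rfl

lemma oplus_sub (A B : H →L[ℂ] H) : oplus A - oplus B = oplus (A - B) := by
  ext x : 1
  refine L2_ext ?_ ?_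
  · simp [ContinuousLinearMap.sub_apply, oplus_fst, WithLp.sub_fst]
  · simp [ContinuousLinearMap.sub_apply, oplus_snd, WithLp.sub_snd]

lemma oplus_smul (c : ℂ) (A : H →L[ℂ] H) : c • oplus A = oplus (c • A) := by
  ext x : 1
  refine L2_ext ?_ ?_
  · simp [oplus_fst, WithLp.smul_fst]
  · simp [oplus_snd, WithLp.smul_snd]

lemma norm_fst_le' (x : WithLp 2 (H × H)) : ‖x.fst‖ ≤ ‖x‖ := by
  have h := WithLp.prod_norm_sq_eq_of_L2 x
  nlinarith [norm_nonneg x, norm_nonneg x.fst, norm_nonneg x.snd, sq_nonneg ‖x.snd‖]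

lemma norm_oplus (A : H →L[ℂ] H) : ‖oplus A‖ = ‖A‖ := by
  apply le_antisymm
  · refine ContinuousLinearMap.opNorm_le_bound _ (norm_nonneg A) fun x => ?_
    rw [oplus_apply, WithLp.equiv_symm_apply, WithLp.norm_toLp_fst]
    exact (A.le_opNorm x.fst).trans (by gcongr; exact norm_fst_le' x)
  · refine ContinuousLinearMap.opNorm_le_bound _ (norm_nonneg _) fun ξ => ?_
    have h1 : oplus A ((WithLp.equiv 2 (H × H)).symm (ξ, 0)) =
        (WithLp.equiv 2 (H × H)).symm (A ξ, 0) := rfl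
    calc ‖A ξ‖ = ‖oplus A ((WithLp.equiv 2 (H × H)).symm (ξ, 0))‖ := by
          rw [h1, WithLp.equiv_symm_apply, WithLp.norm_toLp_fst]
      _ ≤ ‖oplus A‖ * ‖(WithLp.equiv 2 (H × H)).symm (ξ, 0)‖ := ContinuousLinearMap.le_opNorm _ _
      _ = ‖oplus A‖ * ‖ξ‖ := by rw [WithLp.equiv_symm_apply, WithLp.norm_toLp_fst]

lemma star_oplus (A : H →L[ℂ] H) : star (oplus A) = oplus (star A) := by
  rw [ContinuousLinearMap.star_eq_adjoint]
  symm
  rw [ContinuousLinearMap.eq_adjoint_iff]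
  intro x y
  simp only [oplus_apply]
  rw [ContinuousLinearMap.star_eq_adjoint]
  simp [WithLp.prod_inner_apply, ContinuousLinearMap.adjoint_inner_left]

lemma isSelfAdjoint_oplus {A : H →L[ℂ] H} (hA : IsSelfAdjoint A) : IsSelfAdjoint (oplus A) := by
  rw [IsSelfAdjoint, star_oplus, hA.star_eq]

noncomputable def compr (T : WithLp 2 (H × H) →L[ℂ] WithLp 2 (H × H)) : H →L[ℂ] H :=
  (((ContinuousLinearMap.fst ℂ H H).comp
      (WithLp.prodContinuousLinearEquiv 2 ℂ H H).toContinuousLinearMap).comp T).comp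
    ((WithLp.prodContinuousLinearEquiv 2 ℂ H H).symm.toContinuousLinearMap.comp
      (ContinuousLinearMap.inl ℂ H H))

lemma compr_apply (T : WithLp 2 (H × H) →L[ℂ] WithLp 2 (H × H)) (ξ : H) :
    compr T ξ = (T ((WithLp.equiv 2 (H × H)).symm (ξ, 0))).fst := rfl

lemma norm_compr_le (T : WithLp 2 (H × H) →L[ℂ] WithLp 2 (H × H)) : ‖compr T‖ ≤ ‖T‖ := by
  refine ContinuousLinearMap.opNorm_le_bound _ (norm_nonneg _) fun ξ => ?_
  rw [compr_apply]
  refine (norm_fst_le' _).trans ?_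
  calc ‖T ((WithLp.equiv 2 (H × H)).symm (ξ, 0))‖
      ≤ ‖T‖ * ‖(WithLp.equiv 2 (H × H)).symm (ξ, 0)‖ := T.le_opNorm _
    _ = ‖T‖ * ‖ξ‖ := by rw [WithLp.equiv_symm_apply, WithLp.norm_toLp_fst]

lemma isSelfAdjoint_compr {T : WithLp 2 (H × H) →L[ℂ] WithLp 2 (H × H)}
    (hT : IsSelfAdjoint T) : IsSelfAdjoint (compr T) := by
  rw [ContinuousLinearMap.isSelfAdjoint_iff_isSymmetric] at hT ⊢
  intro ξ η
  have h1 : ∀ (a : WithLp 2 (H × H)) (b : H),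
      (inner ℂ a ((WithLp.equiv 2 (H × H)).symm (b, 0)) : ℂ) = inner ℂ a.fst b := by
    intro a b; simp [WithLp.prod_inner_apply]
  have h2 : ∀ (b : H) (a : WithLp 2 (H × H)),
      (inner ℂ ((WithLp.equiv 2 (H × H)).symm (b, 0)) a : ℂ) = inner ℂ b a.fst := by
    intro b a; simp [WithLp.prod_inner_apply]
  calc (inner ℂ (compr T ξ) η : ℂ)
      = inner ℂ (T ((WithLp.equiv 2 (H × H)).symm (ξ, 0)))
          ((WithLp.equiv 2 (H × H)).symm (η, 0)) := (h1 _ _).symm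
    _ = inner ℂ ((WithLp.equiv 2 (H × H)).symm (ξ, 0))
          (T ((WithLp.equiv 2 (H × H)).symm (η, 0))) := hT _ _
    _ = inner ℂ ξ (compr T η) := h2 _ _

/-- The quotient Finsler norm of a tangent vector `W` at a partial isometry `V`:
`|W|_V = inf { max(‖A‖,‖B‖) : A,B selfadjoint, iAV − iVB = W }`. -/
noncomputable def finslerNorm {E : Type*} [NormedAddCommGroup E] [InnerProductSpace ℂ E]
    [CompleteSpace E] (V W : E →L[ℂ] E) : ℝ :=
  sInf { r : ℝ | ∃ A B : E →L[ℂ] E, IsSelfAdjoint A ∧ IsSelfAdjoint B ∧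
    Complex.I • (A * V) - Complex.I • (V * B) = W ∧ r = max ‖A‖ ‖B‖ }

/-- For a partial isometry `V` on `H` and a tangent vector
`𝒱 = iXV − iVY`, the operators `V⊕0` and `𝒱⊕0` on the Hilbert space `H × H`
(with the sum inner product, i.e. `WithLp 2 (H × H)`) satisfy: `V⊕0` is a partial
isometry, `𝒱⊕0` is a tangent vector at `V⊕0`, and `|𝒱⊕0|_{V⊕0} = |𝒱|_V`. -/
theorem finslerNorm_oplus_zero
    (V X Y : H →L[ℂ] H) (hV : V * star V * V = V)
    (hX : IsSelfAdjoint X) (hY : IsSelfAdjoint Y)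
    (𝒱 : H →L[ℂ] H) (h𝒱 : 𝒱 = Complex.I • (X * V) - Complex.I • (V * Y))
    (Vo 𝒱o : WithLp 2 (H × H) →L[ℂ] WithLp 2 (H × H))
    (hVo : ∀ ξ η : H, Vo ((WithLp.equiv 2 (H × H)).symm (ξ, η)) =
      (WithLp.equiv 2 (H × H)).symm (V ξ, 0))
    (h𝒱o : ∀ ξ η : H, 𝒱o ((WithLp.equiv 2 (H × H)).symm (ξ, η)) =
      (WithLp.equiv 2 (H × H)).symm (𝒱 ξ, 0)) :
    Vo * star Vo * Vo = Vo ∧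
    (∃ Xbig Ybig : WithLp 2 (H × H) →L[ℂ] WithLp 2 (H × H), IsSelfAdjoint Xbig ∧ IsSelfAdjoint Ybig ∧
      𝒱o = Complex.I • (Xbig * Vo) - Complex.I • (Vo * Ybig)) ∧
    finslerNorm Vo 𝒱o = finslerNorm V 𝒱 := by
  have hVoeq : Vo = oplus V := by
    ext x : 1
    exact hVo x.fst x.snd
  have h𝒱oeq : 𝒱o = oplus 𝒱 := by
    ext x : 1
    exact h𝒱o x.fst x.snd
  refine ⟨?_, ?_, ?_⟩
  · rw [hVoeq, star_oplus, oplus_mul, oplus_mul, hV]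
  · refine ⟨oplus X, oplus Y, isSelfAdjoint_oplus hX, isSelfAdjoint_oplus hY, ?_⟩
    rw [hVoeq, h𝒱oeq, oplus_mul, oplus_mul, oplus_smul, oplus_smul, oplus_sub, ← h𝒱]
  · -- sets
    set S := { r : ℝ | ∃ A B : H →L[ℂ] H, IsSelfAdjoint A ∧ IsSelfAdjoint B ∧
      Complex.I • (A * V) - Complex.I • (V * B) = 𝒱 ∧ r = max ‖A‖ ‖B‖ } with hS
    set T := { r : ℝ | ∃ A B : WithLp 2 (H × H) →L[ℂ] WithLp 2 (H × H),
      IsSelfAdjoint A ∧ IsSelfAdjoint B ∧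
      Complex.I • (A * Vo) - Complex.I • (Vo * B) = 𝒱o ∧ r = max ‖A‖ ‖B‖ } with hT
    have hSbdd : BddBelow S := ⟨0, fun r ⟨A, B, _, _, _, hr⟩ =>
      hr ▸ le_max_of_le_left (norm_nonneg A)⟩
    have hTbdd : BddBelow T := ⟨0, fun r ⟨A, B, _, _, _, hr⟩ =>
      hr ▸ le_max_of_le_left (norm_nonneg A)⟩
    have hSne : S.Nonempty := ⟨max ‖X‖ ‖Y‖, X, Y, hX, hY, h𝒱.symm, rfl⟩
    have hTne : T.Nonempty := ⟨max ‖oplus X‖ ‖oplus Y‖, oplus X, oplus Y,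
      isSelfAdjoint_oplus hX, isSelfAdjoint_oplus hY, by
        rw [hVoeq, h𝒱oeq, oplus_mul, oplus_mul, oplus_smul, oplus_smul, oplus_sub, ← h𝒱], rfl⟩
    refine le_antisymm ?_ ?_
    · -- sInf T ≤ sInf S
      refine le_csInf hSne fun r hr => ?_
      obtain ⟨A, B, hA, hB, heq, hr⟩ := hr
      refine csInf_le hTbdd ⟨oplus A, oplus B, isSelfAdjoint_oplus hA, isSelfAdjoint_oplus hB, ?_, ?_⟩
      · rw [hVoeq, h𝒱oeq, oplus_mul, oplus_mul, oplus_smul, oplus_smul, oplus_sub, heq]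
      · rw [hr, norm_oplus, norm_oplus]
    · -- sInf S ≤ sInf T
      refine le_csInf hTne fun r hr => ?_
      obtain ⟨Ab, Bb, hAb, hBb, heq, hr⟩ := hr
      have heqsmall : Complex.I • (compr Ab * V) - Complex.I • (V * compr Bb) = 𝒱 := by
        ext ξ
        have hb : (Complex.I • (Ab * Vo) - Complex.I • (Vo * Bb))
            ((WithLp.equiv 2 (H × H)).symm (ξ, 0)) =
            𝒱o ((WithLp.equiv 2 (H × H)).symm (ξ, 0)) := by rw [heq]
        rw [h𝒱o ξ 0] at hb
        simp only [ContinuousLinearMap.sub_apply, ContinuousLinearMap.smul_apply,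
          ContinuousLinearMap.mul_apply] at hb
        rw [hVo ξ 0] at hb
        have hB1 : Vo (Bb ((WithLp.equiv 2 (H × H)).symm (ξ, 0))) =
            (WithLp.equiv 2 (H × H)).symm (V (compr Bb ξ), 0) :=
          hVo (Bb ((WithLp.equiv 2 (H × H)).symm (ξ, 0))).fst
            (Bb ((WithLp.equiv 2 (H × H)).symm (ξ, 0))).snd
        rw [hB1] at hb
        have hfst := congrArg (fun z : WithLp 2 (H × H) => z.fst) hb
        simp only [WithLp.sub_fst, WithLp.smul_fst, WithLp.equiv_symm_apply, WithLp.toLp_fst] at hfst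
        simp only [ContinuousLinearMap.sub_apply, ContinuousLinearMap.smul_apply,
          ContinuousLinearMap.mul_apply, compr_apply]
        exact hfst
      refine (csInf_le hSbdd ⟨compr Ab, compr Bb, isSelfAdjoint_compr hAb,
        isSelfAdjoint_compr hBb, heqsmall, rfl⟩).trans ?_
      rw [hr]
      exact max_le_max (norm_compr_le Ab) (norm_compr_le Bb)
end

section
/- Let V be a partial isometry on a complex Hilbert space H. Then the following are equivalent: (i) there exist unitaries U, W ∈ B(H) and an orthogonal projection P ∈ B(H) such that V = U P W*; (ii) V is balanced, i.e. there exists a ℂ-linear isometric isomorphism between the kernel of V and the orthogonal complement of the range of V (note that the range of a partial isometry is closed). -/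
variable {H : Type*} [NormedAddCommGroup H] [InnerProductSpace ℂ H] [CompleteSpace H]

local notation "⟪" x ", " y "⟫" => @inner ℂ _ _ x y

/-- A partial isometry `V` can be written as `V = U P W*` with `U`, `W`
unitary and `P` an orthogonal projection if and only if `V` is balanced, i.e. the kernel
of `V` and the orthogonal complement of its range are isometrically isomorphic. -/
theorem balanced_iff_kernel_isometric_range_compl
    (V : H →L[ℂ] H) (hV : V * star V * V = V) :
    (∃ U W P : H →L[ℂ] H, U ∈ unitary (H →L[ℂ] H) ∧ W ∈ unitary (H →L[ℂ] H) ∧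
      IsSelfAdjoint P ∧ P * P = P ∧ V = U * P * star W) ↔
    Nonempty ((LinearMap.ker (V : H →ₗ[ℂ] H)) ≃ₗᵢ[ℂ] ((LinearMap.range (V : H →ₗ[ℂ] H))ᗮ)) := by
  constructor
  · rintro ⟨U, W, P, hU, hW, hPsa, hP2, hVeq⟩
    have hU1 : star U * U = 1 := Unitary.star_mul_self_of_mem hU
    have hU2 : U * star U = 1 := Unitary.mul_star_self_of_mem hU
    have hW1 : star W * W = 1 := Unitary.star_mul_self_of_mem hW
    have hW2 : W * star W = 1 := Unitary.mul_star_self_of_mem hW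
    have hUinj : Function.Injective U := by
      intro a b hab
      have ha : (star U * U) a = (star U * U) b := by
        simp only [ContinuousLinearMap.mul_apply, hab]
      simpa [hU1] using ha
    have hVapp : ∀ x, V x = U (P (star W x)) := by
      intro x; rw [hVeq]; rfl
    have hPinner : ∀ a b, ⟪P a, b⟫ = ⟪a, P b⟫ := by
      intro a b
      conv_lhs => rw [← hPsa]
      simp [ContinuousLinearMap.star_eq_adjoint, ContinuousLinearMap.adjoint_inner_left]
    have hmem : ∀ x : LinearMap.ker (V : H →ₗ[ℂ] H), U (star W (x : H)) ∈ (LinearMap.range (V : H →ₗ[ℂ] H))ᗮ := by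
      rintro ⟨x, hx⟩
      rw [LinearMap.mem_ker, ContinuousLinearMap.coe_coe] at hx
      rw [Submodule.mem_orthogonal]
      rintro u ⟨y, rfl⟩
      have hPWx : P (star W x) = 0 := by
        apply hUinj
        rw [← hVapp x, hx, map_zero]
      show ⟪V y, U (star W x)⟫ = 0
      rw [hVapp y, ContinuousLinearMap.inner_map_map_of_mem_unitary hU, hPinner, hPWx,
        inner_zero_right]
    have hmem' : ∀ z : (((LinearMap.range (V : H →ₗ[ℂ] H))ᗮ : Submodule ℂ H)),
        W (star U (z : H)) ∈ LinearMap.ker (V : H →ₗ[ℂ] H) := by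
      rintro ⟨z, hz⟩
      rw [LinearMap.mem_ker]
      have hPUz : P (star U z) = 0 := by
        apply ext_inner_right ℂ
        intro y
        rw [hPinner, inner_zero_left]
        have h1 : ⟪(star U) z, P y⟫ = ⟪z, U (P y)⟫ := by
          simp [ContinuousLinearMap.star_eq_adjoint, ContinuousLinearMap.adjoint_inner_left]
        rw [h1]
        have hUPy : U (P y) ∈ LinearMap.range (V : H →ₗ[ℂ] H) := by
          refine ⟨W y, ?_⟩
          rw [ContinuousLinearMap.coe_coe, hVapp]
          congr 1
          have h2 : star W (W y) = (star W * W) y := rfl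
          rw [h2, hW1]; rfl
        exact (Submodule.mem_orthogonal' _ _).1 hz _ hUPy
      show V (W (star U z)) = 0
      rw [hVapp]
      have h2 : star W (W (star U z)) = (star W * W) (star U z) := rfl
      rw [h2, hW1, ContinuousLinearMap.one_apply, hPUz, map_zero]
    refine ⟨?_⟩
    refine LinearIsometryEquiv.mk (LinearEquiv.ofLinear
      (LinearMap.codRestrict _ (((U * star W).toLinearMap).comp (LinearMap.ker (V : H →ₗ[ℂ] H)).subtype)
        (fun x => hmem x))
      (LinearMap.codRestrict _ (((W * star U).toLinearMap).comp
        ((LinearMap.range (V : H →ₗ[ℂ] H))ᗮ).subtype) (fun z => hmem' z)) ?_ ?_) ?_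
    · ext x
      show U (star W (W (star U (x : H)))) = (x : H)
      have h1 : star W (W (star U (x : H))) = (star W * W) (star U (x : H)) := rfl
      have h2 : U (star U (x : H)) = (U * star U) (x : H) := rfl
      rw [h1, hW1, ContinuousLinearMap.one_apply, h2, hU2, ContinuousLinearMap.one_apply]
    · ext z
      show W (star U (U (star W (z : H)))) = (z : H)
      have h1 : star U (U (star W (z : H))) = (star U * U) (star W (z : H)) := rfl
      have h2 : W (star W (z : H)) = (W * star W) (z : H) := rfl
      rw [h1, hU1, ContinuousLinearMap.one_apply, h2, hW2, ContinuousLinearMap.one_apply]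
    · intro x
      show ‖U (star W (x : H))‖ = ‖(x : H)‖
      rw [ContinuousLinearMap.norm_map_of_mem_unitary hU]
      exact ContinuousLinearMap.norm_map_of_mem_unitary (Unitary.star_mem hW) _
  · rintro ⟨e⟩
    set K : Submodule ℂ H := LinearMap.ker (V : H →ₗ[ℂ] H) with hK
    set N : Submodule ℂ H := (LinearMap.range (V : H →ₗ[ℂ] H))ᗮ with hN
    haveI : CompleteSpace K := (ContinuousLinearMap.isClosed_ker V).completeSpace_coe
    set Q : H →L[ℂ] H := star V * V with hQdef
    have hQsa : IsSelfAdjoint Q := by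
      show star (star V * V) = star V * V
      rw [star_mul, star_star]
    have hQ2 : Q * Q = Q := by
      calc Q * Q = star V * (V * star V * V) := by simp only [hQdef, mul_assoc]
        _ = star V * V := by rw [hV]
        _ = Q := rfl
    have hVQ : ∀ x, V (Q x) = V x := by
      intro x
      have h : V (Q x) = (V * Q) x := rfl
      rw [h, hQdef, ← mul_assoc, hV]
    have hQorth : ∀ x, Q x ∈ Kᗮ := by
      intro x
      rw [Submodule.mem_orthogonal]
      intro u hu
      rw [hK, LinearMap.mem_ker, ContinuousLinearMap.coe_coe] at hu
      have h : ⟪u, Q x⟫ = ⟪V u, V x⟫ := by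
        show ⟪u, (star V) (V x)⟫ = _
        simp [ContinuousLinearMap.star_eq_adjoint, ContinuousLinearMap.adjoint_inner_right]
      rw [h, hu, inner_zero_left]
    have hpK : ∀ x, ((K.orthogonalProjectionOnto x : H)) = x - Q x := by
      intro x
      apply Submodule.eq_starProjection_of_mem_orthogonal
      · rw [hK, LinearMap.mem_ker, ContinuousLinearMap.coe_coe, map_sub, hVQ, sub_self]
      · simpa using hQorth x
    have hpKQ : ∀ x, K.orthogonalProjectionOnto (Q x) = 0 := fun x =>
      Submodule.orthogonalProjectionOnto_apply_of_mem_orthogonal (hQorth x)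
    have hVinner : ∀ x y, ⟪V x, V y⟫ = ⟪x, y⟫ - ⟪x, ((K.orthogonalProjectionOnto y : H))⟫ := by
      intro x y
      have h1 : ⟪V x, V y⟫ = ⟪x, Q y⟫ := by
        show _ = ⟪x, (star V) (V y)⟫
        simp [ContinuousLinearMap.star_eq_adjoint, ContinuousLinearMap.adjoint_inner_right]
      have h2 : Q y = y - (K.orthogonalProjectionOnto y : H) := by
        rw [hpK y]; abel
      rw [h1, h2, inner_sub_right]
    have hproj : ∀ x y, ⟪x, ((K.orthogonalProjectionOnto y : H))⟫ =
        ⟪((K.orthogonalProjectionOnto x : H)), ((K.orthogonalProjectionOnto y : H))⟫ := by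
      intro x y
      have h3 : ⟪x - (K.orthogonalProjectionOnto x : H), ((K.orthogonalProjectionOnto y : H))⟫ = 0 :=
        (Submodule.mem_orthogonal' _ _).1 (K.sub_starProjection_mem_orthogonal x) _
          (K.orthogonalProjectionOnto y).2
      rw [inner_sub_left] at h3
      exact sub_eq_zero.mp h3
    -- range V is closed
    haveI : CompleteSpace Kᗮ := (Submodule.isClosed_orthogonal K).completeSpace_coe
    have hQfix : ∀ x : Kᗮ, Q (x : H) = (x : H) := by
      intro x
      have h0 : K.orthogonalProjectionOnto (x : H) = 0 :=
        Submodule.orthogonalProjectionOnto_apply_of_mem_orthogonal x.2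
      have h1 := hpK (x : H)
      rw [h0] at h1
      simp only [ZeroMemClass.coe_zero] at h1
      exact (sub_eq_zero.mp h1.symm).symm
    have hnormV : ∀ x : Kᗮ, ‖V (x : H)‖ = ‖(x : H)‖ := by
      intro x
      have h4 : ⟪V (x : H), V (x : H)⟫ = ⟪(x : H), (x : H)⟫ := by
        rw [hVinner]
        rw [Submodule.orthogonalProjectionOnto_apply_of_mem_orthogonal x.2]
        simp
      rw [inner_self_eq_norm_sq_to_K, inner_self_eq_norm_sq_to_K] at h4
      have h5 : ‖V (x : H)‖ ^ 2 = ‖(x : H)‖ ^ 2 := by exact_mod_cast h4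
      nlinarith [norm_nonneg (V (x : H)), norm_nonneg (x : H)]
    set g : Kᗮ →ₗᵢ[ℂ] H := ⟨V.toLinearMap.comp Kᗮ.subtype, hnormV⟩ with hg
    have hrange_eq : (LinearMap.range (V : H →ₗ[ℂ] H) : Set H) = Set.range g := by
      ext z
      constructor
      · rintro ⟨x, rfl⟩
        exact ⟨⟨Q x, hQorth x⟩, hVQ x⟩
      · rintro ⟨x, rfl⟩
        exact ⟨(x : H), rfl⟩
    have hclosed : IsClosed (LinearMap.range (V : H →ₗ[ℂ] H) : Set H) := by
      rw [hrange_eq]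
      exact g.isometry.isClosedEmbedding.isClosed_range
    have hNperp : Nᗮ = LinearMap.range (V : H →ₗ[ℂ] H) := by
      rw [hN, Submodule.orthogonal_orthogonal_eq_closure,
        hclosed.submodule_topologicalClosure_eq]
    haveI : CompleteSpace (LinearMap.range (V : H →ₗ[ℂ] H)) := hclosed.completeSpace_coe
    -- the candidate unitary
    set eL : K →L[ℂ] N := e.toLinearIsometry.toContinuousLinearMap with heL
    set f : H →L[ℂ] H := V + N.subtypeL ∘L (eL ∘L (K.orthogonalProjectionOnto)) with hf
    have hfapp : ∀ x, f x = V x + ((e (K.orthogonalProjectionOnto x) : N) : H) := fun x => rfl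
    have hinner : ∀ x y, ⟪f x, f y⟫ = ⟪x, y⟫ := by
      intro x y
      rw [hfapp, hfapp, inner_add_left, inner_add_right, inner_add_right]
      have t2 : ⟪V x, ((e (K.orthogonalProjectionOnto y) : N) : H)⟫ = 0 :=
        (Submodule.mem_orthogonal _ _).1 (e (K.orthogonalProjectionOnto y)).2 (V x) ⟨x, rfl⟩
      have t3 : ⟪((e (K.orthogonalProjectionOnto x) : N) : H), V y⟫ = 0 :=
        (Submodule.mem_orthogonal' _ _).1 (e (K.orthogonalProjectionOnto x)).2 (V y) ⟨y, rfl⟩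
      have t4 : ⟪((e (K.orthogonalProjectionOnto x) : N) : H),
          ((e (K.orthogonalProjectionOnto y) : N) : H)⟫ =
          ⟪((K.orthogonalProjectionOnto x : H)), ((K.orthogonalProjectionOnto y : H))⟫ := by
        rw [← Submodule.coe_inner, e.inner_map_map, Submodule.coe_inner]
      rw [t2, t3, t4, hVinner, hproj]
      ring
    have hnorm : ∀ x, ‖f x‖ = ‖x‖ := (LinearMap.norm_map_iff_inner_map_map f).2 hinner
    have hinj : Function.Injective f := by
      intro x y hxy
      have h6 : ‖x - y‖ = 0 := by rw [← hnorm, map_sub, hxy, sub_self, norm_zero]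
      have := norm_eq_zero.mp h6
      rwa [sub_eq_zero] at this
    have hsurj : Function.Surjective f := by
      intro z
      obtain ⟨b, hb, a, ha, rfl⟩ := N.exists_add_mem_mem_orthogonal z
      rw [hNperp] at ha
      obtain ⟨x₀, rfl⟩ := ha
      refine ⟨Q x₀ + ((e.symm ⟨b, hb⟩ : K) : H), ?_⟩
      have hw : V ((e.symm ⟨b, hb⟩ : K) : H) = 0 := by
        exact LinearMap.mem_ker.mp (e.symm ⟨b, hb⟩).2
      rw [hfapp, map_add, hVQ, hw, add_zero, map_add, hpKQ, zero_add,
        Submodule.orthogonalProjectionOnto_mem_subspace_eq_self, e.apply_symm_apply]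
      exact add_comm _ _
    set Φ : H ≃ₗᵢ[ℂ] H :=
      { LinearEquiv.ofBijective (f : H →ₗ[ℂ] H) ⟨hinj, hsurj⟩ with norm_map' := hnorm } with hΦ
    refine ⟨(Φ : H →L[ℂ] H), 1, Q, ?_, ?_, hQsa, hQ2, ?_⟩
    · exact (Unitary.linearIsometryEquiv.symm Φ).property
    · exact one_mem (unitary (H →L[ℂ] H))
    · rw [star_one, mul_one]
      ext x
      rw [ContinuousLinearMap.mul_apply]
      have h7 : (Φ : H →L[ℂ] H) (Q x) = f (Q x) := rfl
      rw [h7, hfapp, hpKQ, map_zero, hVQ]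
      simp
end
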